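/- Let n ≥ 1 be an integer, let Δ : [0,∞) → [1,∞), let γ > 0, and suppose S := ∑_{k∈ℤⁿ, k≠0} 1/(|k|₁ · Δ(|k|₁)) < ∞. Then the n-dimensional Lebesgue measure of the set of ω ∈ [0,2π]ⁿ for which there exists a nonzero k ∈ ℤⁿ with |k·ω| < γ/Δ(|k|₁) is at most 4 (2π)^{n(n−1)} γ S. Consequently, the set of ω ∈ [0,2π]ⁿ satisfying the Brjuno–Rüssmann non-resonance conditions |k·ω| ≥ γ/Δ(|k|₁) for every nonzero k ∈ ℤⁿ has Lebesgue measure at least (2π)ⁿ − 4 (2π)^{n(n−1)} γ S. -/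

import Mathlib

open Real MeasureTheory

lemma abs_affine_vol (a c ε : ℝ) (ha : a ≠ 0) :
    volume {x : ℝ | |a * x + c| < ε} ≤ ENNReal.ofReal (2 * ε / |a|) := by
  have hA : (0:ℝ) < |a| := abs_pos.mpr ha
  have h : {x : ℝ | |a * x + c| < ε} ⊆ Set.Ioo (-c/a - ε/|a|) (-c/a + ε/|a|) := by
    intro x hx
    have hx' : |a * x + c| < ε := hx
    have h1 : |x - (-c/a)| < ε / |a| := by
      have he : x - (-c/a) = (a*x + c)/a := by field_simp; ring
      rw [he, abs_div]
      exact (div_lt_div_iff_of_pos_right hA).mpr hx'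
    rw [abs_lt] at h1
    constructor <;> [linarith [h1.1]; linarith [h1.2]]
  calc volume {x : ℝ | |a * x + c| < ε} ≤ volume (Set.Ioo (-c/a - ε/|a|) (-c/a + ε/|a|)) :=
        measure_mono h
    _ = ENNReal.ofReal (2 * ε / |a|) := by
        rw [Real.volume_Ioo]; congr 1; field_simp; ring

lemma slice_vol {m : ℕ} (k : Fin (m+1) → ℤ) (i₀ : Fin (m+1)) (ha : k i₀ ≠ 0) (ε : ℝ) :
    volume {ω : Fin (m+1) → ℝ | (∀ i, ω i ∈ Set.Icc 0 (2*π)) ∧ |∑ i, (k i : ℝ) * ω i| < ε} ≤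
      ENNReal.ofReal (2 * ε / |(k i₀ : ℝ)|) * ENNReal.ofReal ((2*π)^m) := by
  set B : Set (Fin (m+1) → ℝ) :=
    {ω | (∀ i, ω i ∈ Set.Icc 0 (2*π)) ∧ |∑ i, (k i : ℝ) * ω i| < ε} with hBdef
  have hmeas : Measurable fun ω : Fin (m+1) → ℝ => |∑ i, (k i : ℝ) * ω i| := by fun_prop
  have hboxn : {ω : Fin (m+1) → ℝ | ∀ i, ω i ∈ Set.Icc 0 (2*π)}
      = Set.univ.pi fun _ => Set.Icc (0:ℝ) (2*π) := by
    ext ω; simp only [Set.mem_setOf_eq, Set.mem_pi, Set.mem_univ, forall_true_left, Set.mem_Icc, true_implies]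
  have hB : MeasurableSet B := by
    apply MeasurableSet.inter
    · rw [show (fun ω : Fin (m+1) → ℝ => ∀ i, ω i ∈ Set.Icc 0 (2*π))
          = {ω : Fin (m+1) → ℝ | ∀ i, ω i ∈ Set.Icc 0 (2*π)} from rfl, hboxn]
      exact MeasurableSet.univ_pi fun _ => measurableSet_Icc
    · exact measurableSet_lt hmeas measurable_const
  set e := MeasurableEquiv.piFinSuccAbove (fun _ : Fin (m+1) => ℝ) i₀ with he
  have hmp := (measurePreserving_piFinSuccAbove (fun _ : Fin (m+1) => (volume : Measure ℝ)) i₀).symm e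
  have h1 : (volume : Measure (Fin (m+1) → ℝ)) B
      = ((volume : Measure ℝ).prod (Measure.pi fun _ : Fin m => volume)) (e.symm ⁻¹' B) := by
    rw [MeasureTheory.volume_pi]
    exact (hmp.measure_preimage hB.nullMeasurableSet).symm
  rw [h1, Measure.prod_apply_symm (e.symm.measurable hB)]
  have hbox : MeasurableSet (Set.univ.pi fun _ : Fin m => Set.Icc (0:ℝ) (2*π)) :=
    MeasurableSet.univ_pi fun _ => measurableSet_Icc
  have key : ∀ y : Fin m → ℝ,
      volume ((fun x => (x, y)) ⁻¹' (e.symm ⁻¹' B)) ≤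
        (Set.univ.pi fun _ : Fin m => Set.Icc (0:ℝ) (2*π)).indicator
          (fun _ => ENNReal.ofReal (2 * ε / |(k i₀ : ℝ)|)) y := by
    intro y
    have hslice : ∀ (x : ℝ) (j : Fin (m+1)),
        e.symm (x, y) j = Fin.insertNth (α := fun _ => ℝ) i₀ x y j := fun _ _ => rfl
    by_cases hy : y ∈ Set.univ.pi fun _ : Fin m => Set.Icc (0:ℝ) (2*π)
    · rw [Set.indicator_of_mem hy]
      refine le_trans (measure_mono ?_)
        (abs_affine_vol (k i₀ : ℝ) (∑ j, (k (i₀.succAbove j) : ℝ) * y j) ε (by exact_mod_cast ha))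
      intro x hx
      have hx2 : |∑ i, (k i : ℝ) * e.symm (x, y) i| < ε := hx.2
      rw [Fin.sum_univ_succAbove (fun i => (k i : ℝ) * e.symm (x, y) i) i₀] at hx2
      simp only [hslice, Fin.insertNth_apply_same, Fin.insertNth_apply_succAbove] at hx2
      exact hx2
    · rw [Set.indicator_of_notMem hy]
      have hempty : ((fun x => (x, y)) ⁻¹' (e.symm ⁻¹' B)) = ∅ := by
        apply Set.eq_empty_iff_forall_notMem.mpr
        intro x hx
        apply hy
        intro j _
        have h3 := hx.1 (i₀.succAbove j)
        rw [hslice x (i₀.succAbove j), Fin.insertNth_apply_succAbove] at h3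
        exact h3
      rw [hempty, measure_empty]
  calc ∫⁻ y, volume ((fun x => (x, y)) ⁻¹' (e.symm ⁻¹' B)) ∂(Measure.pi fun _ : Fin m => volume)
      ≤ ∫⁻ y, (Set.univ.pi fun _ : Fin m => Set.Icc (0:ℝ) (2*π)).indicator
          (fun _ => ENNReal.ofReal (2 * ε / |(k i₀ : ℝ)|)) y ∂(Measure.pi fun _ : Fin m => volume) :=
        lintegral_mono key
    _ = ENNReal.ofReal (2 * ε / |(k i₀ : ℝ)|) * ENNReal.ofReal ((2*π)^m) := by
        rw [lintegral_indicator_const hbox, ← MeasureTheory.volume_pi, volume_pi_pi]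
        congr 1
        simp [Real.volume_Icc, ← ENNReal.ofReal_pow (by positivity : (0:ℝ) ≤ 2*π)]
        rw [ENNReal.ofReal_pow (by positivity : (0:ℝ) ≤ 2*π), ENNReal.ofReal_mul (by norm_num : (0:ℝ) ≤ 2)]
        simp

lemma br_arith (γ D a N P Q : ℝ) (hγ : 0 < γ) (hD : 0 < D) (ha : 1 ≤ a) (hN : 1 ≤ N)
    (hP : 0 < P) (hNa : N * P ≤ 2 * Q * a) :
    2 * (γ / D) / a * P ≤ 4 * Q * γ * (1 / (N * D)) := by
  have ha0 : (0:ℝ) < a := lt_of_lt_of_le one_pos ha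
  have hN0 : (0:ℝ) < N := lt_of_lt_of_le one_pos hN
  rw [show 2 * (γ / D) / a * P = (2 * γ * P) / (a * D) by field_simp,
    show 4 * Q * γ * (1 / (N * D)) = (4 * Q * γ) / (N * D) by rw [mul_one_div],
    div_le_div_iff₀ (by positivity) (by positivity)]
  nlinarith [mul_le_mul_of_nonneg_left hNa (by positivity : (0:ℝ) ≤ 2 * γ * D)]

lemma br_const (m : ℕ) : (m+1:ℝ) * (2*π)^m ≤ 2 * (2*π)^((m+1)*m) := by
  have h2pi : (2:ℝ) ≤ 2*π := by nlinarith [Real.pi_gt_three]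
  have hP : (0:ℝ) < (2*π)^m := by positivity
  have hmm : m ≤ m*m := by nlinarith
  have h1 : (m+1:ℝ) ≤ 2 * (2*π)^(m*m) := by
    calc (m+1:ℝ) ≤ 2^(m+1) := by exact_mod_cast (Nat.lt_two_pow_self (n := m+1)).le
      _ = 2 * 2^m := by ring
      _ ≤ 2 * (2*π)^m := by
          have := pow_le_pow_left₀ (by norm_num : (0:ℝ) ≤ 2) h2pi m
          linarith
      _ ≤ 2 * (2*π)^(m*m) := by
          have := pow_le_pow_right₀ (by linarith : (1:ℝ) ≤ 2*π) hmm
          linarith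
  calc (m+1:ℝ) * (2*π)^m ≤ (2 * (2*π)^(m*m)) * (2*π)^m :=
        mul_le_mul_of_nonneg_right h1 hP.le
    _ = 2 * (2*π)^((m+1)*m) := by rw [mul_assoc, ← pow_add]; ring_nf


/-- Measure estimate for Brjuno–Rüssmann non-resonant frequencies: if
`S = ∑_{k ∈ ℤⁿ, k ≠ 0} 1/(|k|₁ Δ(|k|₁)) < ∞`, then the set of `ω ∈ [0,2π]ⁿ` violating
`|k·ω| ≥ γ/Δ(|k|₁)` for some nonzero `k` has measure at most `4 (2π)^{n(n-1)} γ S`, and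
consequently the set of Brjuno–Rüssmann frequency vectors in `[0,2π]ⁿ` has measure at
least `(2π)ⁿ - 4 (2π)^{n(n-1)} γ S`. -/
theorem brjuno_russmann_measure (n : ℕ) (hn : 1 ≤ n) (Δ : ℝ → ℝ)
    (hΔ1 : ∀ t, 0 ≤ t → 1 ≤ Δ t) (γ : ℝ) (hγ : 0 < γ) (S : ℝ)
    (hS : HasSum (fun k : {k : Fin n → ℤ // k ≠ 0} =>
      1 / ((∑ i, |(k.1 i : ℝ)|) * Δ (∑ i, |(k.1 i : ℝ)|))) S) :
    volume {ω : Fin n → ℝ | (∀ i, ω i ∈ Set.Icc 0 (2 * π)) ∧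
        ∃ k : Fin n → ℤ, k ≠ 0 ∧
          |∑ i, (k i : ℝ) * ω i| < γ / Δ (∑ i, |(k i : ℝ)|)} ≤
      ENNReal.ofReal (4 * (2 * π) ^ (n * (n - 1)) * γ * S) ∧
    ENNReal.ofReal ((2 * π) ^ n - 4 * (2 * π) ^ (n * (n - 1)) * γ * S) ≤
      volume {ω : Fin n → ℝ | (∀ i, ω i ∈ Set.Icc 0 (2 * π)) ∧
        ∀ k : Fin n → ℤ, k ≠ 0 →
          γ / Δ (∑ i, |(k i : ℝ)|) ≤ |∑ i, (k i : ℝ) * ω i|} := by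
  obtain ⟨m, rfl⟩ : ∃ m, n = m + 1 := ⟨n - 1, (Nat.succ_pred_eq_of_pos hn).symm⟩
  simp only [Nat.add_sub_cancel]
  -- basic facts about nonzero k
  have hNfacts : ∀ k : Fin (m+1) → ℤ, k ≠ 0 →
      (1 ≤ ∑ i, |(k i : ℝ)|) ∧ (0 < Δ (∑ i, |(k i : ℝ)|)) := by
    intro k hk
    obtain ⟨j, hj⟩ := Function.ne_iff.mp hk
    have h1 : (1:ℝ) ≤ |(k j : ℝ)| := by
      have := Int.one_le_abs (by simpa using hj)
      calc (1:ℝ) ≤ ((|k j| : ℤ) : ℝ) := by exact_mod_cast this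
        _ = |(k j : ℝ)| := by push_cast; ring
    have h2 : |(k j : ℝ)| ≤ ∑ i, |(k i : ℝ)| :=
      Finset.single_le_sum (f := fun i => |(k i : ℝ)|) (fun i _ => abs_nonneg _)
        (Finset.mem_univ j)
    have hN1 : (1:ℝ) ≤ ∑ i, |(k i : ℝ)| := le_trans h1 h2
    exact ⟨hN1, lt_of_lt_of_le one_pos (hΔ1 _ (by linarith))⟩
  have hterm_nonneg : ∀ k : {k : Fin (m+1) → ℤ // k ≠ 0},
      0 ≤ 1 / ((∑ i, |(k.1 i : ℝ)|) * Δ (∑ i, |(k.1 i : ℝ)|)) := by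
    intro k
    obtain ⟨hN1, hD⟩ := hNfacts k.1 k.2
    positivity
  have hS0 : 0 ≤ S := hS.nonneg hterm_nonneg
  -- the constant
  set C : ℝ := 4 * (2 * π) ^ ((m+1) * m) * γ with hC
  have hC0 : 0 ≤ C := by positivity
  -- per-k sets
  set Bk : {k : Fin (m+1) → ℤ // k ≠ 0} → Set (Fin (m+1) → ℝ) := fun k =>
    {ω | (∀ i, ω i ∈ Set.Icc 0 (2*π)) ∧ |∑ i, (k.1 i : ℝ) * ω i| < γ / Δ (∑ i, |(k.1 i : ℝ)|)}
    with hBk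
  -- per-k bound
  have hper : ∀ k : {k : Fin (m+1) → ℤ // k ≠ 0},
      volume (Bk k) ≤ ENNReal.ofReal
        (C * (1 / ((∑ i, |(k.1 i : ℝ)|) * Δ (∑ i, |(k.1 i : ℝ)|)))) := by
    rintro ⟨k, hk⟩
    obtain ⟨hN1, hD⟩ := hNfacts k hk
    -- choose max coordinate
    obtain ⟨i₀, -, hi₀⟩ := Finset.exists_max_image Finset.univ (fun i => |k i|)
      ⟨0, Finset.mem_univ 0⟩
    have hki₀ : k i₀ ≠ 0 := by
      obtain ⟨j, hj⟩ := Function.ne_iff.mp hk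
      intro h0
      have := hi₀ j (Finset.mem_univ j)
      rw [h0] at this
      simp at this
      exact hj (by simpa using this)
    have ha1 : (1:ℝ) ≤ |(k i₀ : ℝ)| := by
      have := Int.one_le_abs hki₀
      calc (1:ℝ) ≤ ((|k i₀| : ℤ) : ℝ) := by exact_mod_cast this
        _ = |(k i₀ : ℝ)| := by push_cast; ring
    have hNle : (∑ i, |(k i : ℝ)|) ≤ (m+1 : ℝ) * |(k i₀ : ℝ)| := by
      have : ∀ i ∈ Finset.univ, |(k i : ℝ)| ≤ |(k i₀ : ℝ)| := by
        intro i _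
        have := hi₀ i (Finset.mem_univ i)
        calc |(k i : ℝ)| = ((|k i| : ℤ) : ℝ) := by push_cast; ring
          _ ≤ ((|k i₀| : ℤ) : ℝ) := by exact_mod_cast this
          _ = |(k i₀ : ℝ)| := by push_cast; ring
      calc (∑ i, |(k i : ℝ)|) ≤ Finset.univ.card • |(k i₀ : ℝ)| :=
            Finset.sum_le_card_nsmul _ _ _ this
        _ = (m+1 : ℝ) * |(k i₀ : ℝ)| := by
            simp [Finset.card_univ, nsmul_eq_mul]
    have hsv := slice_vol k i₀ hki₀ (γ / Δ (∑ i, |(k i : ℝ)|))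
    refine le_trans hsv ?_
    rw [← ENNReal.ofReal_mul (by positivity)]
    apply ENNReal.ofReal_le_ofReal
    rw [hC]
    have hNa : (∑ i, |(k i : ℝ)|) * (2*π)^m ≤ 2 * (2*π)^((m+1)*m) * |(k i₀ : ℝ)| := by
      have h1 : (∑ i, |(k i : ℝ)|) * (2*π)^m ≤ ((m+1:ℝ) * |(k i₀ : ℝ)|) * (2*π)^m :=
        mul_le_mul_of_nonneg_right hNle (by positivity)
      have h2 := br_const m
      nlinarith [abs_nonneg ((k i₀ : ℝ)), (by positivity : (0:ℝ) < (2*π)^m)]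
    exact br_arith γ (Δ (∑ i, |(k i : ℝ)|)) |(k i₀ : ℝ)| (∑ i, |(k i : ℝ)|)
      ((2*π)^m) ((2*π)^((m+1)*m)) hγ hD ha1 hN1 (by positivity) hNa
  -- the bad set is the union
  set Bad : Set (Fin (m+1) → ℝ) :=
    {ω | (∀ i, ω i ∈ Set.Icc 0 (2 * π)) ∧ ∃ k : Fin (m+1) → ℤ, k ≠ 0 ∧
          |∑ i, (k i : ℝ) * ω i| < γ / Δ (∑ i, |(k i : ℝ)|)} with hBadDef
  have hBadU : Bad = ⋃ k : {k : Fin (m+1) → ℤ // k ≠ 0}, Bk k := by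
    ext ω
    simp only [hBadDef, hBk, Set.mem_setOf_eq, Set.mem_iUnion, Subtype.exists]
    constructor
    · rintro ⟨hbox, k, hk, hlt⟩; exact ⟨k, hk, hbox, hlt⟩
    · rintro ⟨k, hk, hbox, hlt⟩; exact ⟨hbox, k, hk, hlt⟩
  -- measure bound for Bad
  have hBadBound : volume Bad ≤ ENNReal.ofReal (4 * (2 * π) ^ ((m+1) * m) * γ * S) := by
    rw [hBadU]
    refine le_trans (measure_iUnion_le _) ?_
    refine le_trans (ENNReal.tsum_le_tsum hper) ?_
    rw [← ENNReal.ofReal_tsum_of_nonneg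
      (fun k => by have := hterm_nonneg k; positivity)
      ((hS.summable).mul_left C)]
    apply ENNReal.ofReal_le_ofReal
    rw [(hS.mul_left C).tsum_eq]
  refine ⟨hBadBound, ?_⟩
  -- part 2
  set Box : Set (Fin (m+1) → ℝ) := {ω | ∀ i, ω i ∈ Set.Icc 0 (2*π)} with hBoxDef
  have hBoxEq : Box = Set.univ.pi fun _ : Fin (m+1) => Set.Icc (0:ℝ) (2*π) := by
    ext ω
    simp only [hBoxDef, Set.mem_setOf_eq, Set.mem_pi, Set.mem_univ, forall_true_left, true_implies]
  have hBoxVol : volume Box = ENNReal.ofReal ((2*π)^(m+1)) := by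
    rw [hBoxEq, volume_pi_pi]
    simp [Real.volume_Icc, ← ENNReal.ofReal_pow (by positivity : (0:ℝ) ≤ 2*π)]
    rw [ENNReal.ofReal_pow (by positivity : (0:ℝ) ≤ 2*π), ENNReal.ofReal_mul (by norm_num : (0:ℝ) ≤ 2)]
    simp
  have hBadSub : Bad ⊆ Box := fun ω hω => hω.1
  have hBkMeas : ∀ k : {k : Fin (m+1) → ℤ // k ≠ 0}, MeasurableSet (Bk k) := by
    intro k
    apply MeasurableSet.inter
    · rw [show (fun ω : Fin (m+1) → ℝ => ∀ i, ω i ∈ Set.Icc 0 (2*π)) = Box from rfl, hBoxEq]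
      exact MeasurableSet.univ_pi fun _ => measurableSet_Icc
    · have hm2 : Measurable fun ω : Fin (m+1) → ℝ => |∑ i, (k.1 i : ℝ) * ω i| := by fun_prop
      exact measurableSet_lt hm2 measurable_const
  have hBadMeas : MeasurableSet Bad := by
    rw [hBadU]; exact MeasurableSet.iUnion hBkMeas
  have hBadFin : volume Bad ≠ ⊤ :=
    ne_top_of_le_ne_top ENNReal.ofReal_ne_top hBadBound
  have hGood : {ω : Fin (m+1) → ℝ | (∀ i, ω i ∈ Set.Icc 0 (2 * π)) ∧
        ∀ k : Fin (m+1) → ℤ, k ≠ 0 →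
          γ / Δ (∑ i, |(k i : ℝ)|) ≤ |∑ i, (k i : ℝ) * ω i|} = Box \ Bad := by
    ext ω
    simp only [Set.mem_setOf_eq, Set.mem_diff, hBoxDef, hBadDef]
    constructor
    · rintro ⟨hbox, hgood⟩
      refine ⟨hbox, ?_⟩
      rintro ⟨-, k, hk, hlt⟩
      exact absurd hlt (not_lt.mpr (hgood k hk))
    · rintro ⟨hbox, hbad⟩
      refine ⟨hbox, fun k hk => ?_⟩
      by_contra hlt
      exact hbad ⟨hbox, k, hk, not_le.mp hlt⟩
  rw [hGood, measure_diff hBadSub hBadMeas.nullMeasurableSet hBadFin, hBoxVol,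
    ENNReal.ofReal_sub _ (by positivity)]
  exact tsub_le_tsub_left hBadBound _
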